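/- Let R be an excellent semi-local integral domain of dimension 1 with field of fractions K, and let R̃ be the integral closure of R in K. Then there exists a nonzero element f in the Jacobson radical J_R of R such that for every i ≥ 1 one has 1 + f^{i+1}·R̃ ⊆ 1 + f^i·R. In particular, the subgroup topologies on K^× generated by the open subgroups {1 + f^i·R : i ≥ 1} and {1 + f^i·R̃ : i ≥ 1} coincide. -/

import Mathlib

/-- Let `R` be an excellent (Noetherian, with finite normalization)
semi-local integral domain of Krull dimension `1`, with fraction field `K` and
integral closure `R̃ = integralClosure R K`.  Then there is a nonzero element `f`
of the Jacobson radical of `R` such that `1 + f^(i+1)·R̃ ⊆ 1 + f^i·R` for all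
`i ≥ 1`; in particular (since trivially `1 + f^i·R ⊆ 1 + f^i·R̃`), the subgroup
topologies on `K^×` generated by `{1 + f^i·R}` and `{1 + f^i·R̃}` coincide. -/
theorem stmt_0 (R K : Type*) [CommRing R] [IsDomain R] [IsNoetherianRing R]
    [Field K] [Algebra R K] [IsFractionRing R K]
    (hdim : ringKrullDim R = 1)
    (hsemilocal : Finite (MaximalSpectrum R))
    (hfinite : Module.Finite R (integralClosure R K)) :
    ∃ f : R, f ≠ 0 ∧ f ∈ (⊥ : Ideal R).jacobson ∧
      (∀ i : ℕ, 1 ≤ i → ∀ x : K,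
        (∃ y ∈ integralClosure R K, x = 1 + (algebraMap R K f) ^ (i + 1) * y) →
        (∃ z : R, x = 1 + (algebraMap R K f) ^ i * algebraMap R K z)) ∧
      (∀ i : ℕ, 1 ≤ i → ∀ x : K,
        (∃ z : R, x = 1 + (algebraMap R K f) ^ i * algebraMap R K z) →
        (∃ y ∈ integralClosure R K, x = 1 + (algebraMap R K f) ^ i * y)) := by
  classical
  -- common denominator c : c • y ∈ range (algebraMap) for all y ∈ integralClosure
  obtain ⟨s, hs⟩ := Module.Finite.fg_top (R := R) (M := integralClosure R K)
  obtain ⟨c, hc⟩ := IsLocalization.exist_integer_multiples (nonZeroDivisors R) s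
    (fun y => (y : K))
  have hcden : ∀ y ∈ integralClosure R K, ∃ a : R,
      algebraMap R K a = algebraMap R K (c : R) * y := by
    set T : Submodule R K :=
      Submodule.comap (LinearMap.lsmul R K (c : R))
        (LinearMap.range (Algebra.linearMap R K)) with hT
    have hsub : Subalgebra.toSubmodule (integralClosure R K) ≤ T := by
      have h1 : Submodule.map (integralClosure R K).val.toLinearMap
          (Submodule.span R (s : Set (integralClosure R K))) ≤ T := by
        rw [Submodule.map_span, Submodule.span_le]
        rintro x ⟨y, hy, rfl⟩
        obtain ⟨a, ha⟩ := hc y hy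
        exact ⟨a, ha⟩
      rw [hs, Submodule.map_top] at h1
      intro x hx
      exact h1 ⟨⟨x, hx⟩, rfl⟩
    intro y hy
    obtain ⟨a, ha⟩ := hsub hy
    exact ⟨a, by simpa [Algebra.smul_def] using ha⟩
  -- maximal ideals are nonzero
  have hnf : ¬ IsField R := by
    intro h
    rw [ringKrullDim_eq_zero_of_isField h] at hdim
    exact absurd hdim (by norm_num)
  have hmax : ∀ m : MaximalSpectrum R, ∃ a ∈ m.asIdeal, a ≠ (0 : R) := by
    intro m
    rw [← Submodule.ne_bot_iff]
    exact Ring.ne_bot_of_isMaximal_of_not_isField m.isMaximal hnf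
  have := Fintype.ofFinite (MaximalSpectrum R)
  set g : R := ∏ m : MaximalSpectrum R, (hmax m).choose with hg
  have hgne : g ≠ 0 := Finset.prod_ne_zero_iff.mpr fun m _ => (hmax m).choose_spec.2
  have hgjac : g ∈ (⊥ : Ideal R).jacobson := by
    rw [Ideal.jacobson, Ideal.mem_sInf]
    rintro J ⟨-, hJ⟩
    have : (hmax ⟨J, hJ⟩).choose ∣ g :=
      Finset.dvd_prod_of_mem _ (Finset.mem_univ (⟨J, hJ⟩ : MaximalSpectrum R))
    obtain ⟨d, hd⟩ := this
    rw [hd]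
    exact Ideal.mul_mem_right _ _ (hmax ⟨J, hJ⟩).choose_spec.1
  have hcne : (c : R) ≠ 0 := nonZeroDivisors.coe_ne_zero c
  refine ⟨(c : R) * g, mul_ne_zero hcne hgne, Ideal.mul_mem_left _ _ hgjac, ?_, ?_⟩
  · rintro i hi x ⟨y, hy, rfl⟩
    obtain ⟨a, ha⟩ := hcden y hy
    refine ⟨g * a, ?_⟩
    rw [pow_succ, mul_assoc]
    congr 2
    rw [map_mul, map_mul, mul_assoc, ha]
    ring
  · rintro i hi x ⟨z, rfl⟩
    exact ⟨algebraMap R K z, (integralClosure R K).algebraMap_mem z, rfl⟩
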